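/- arXiv:2012.05040 — 2 statements merged into one kernel-verified Lean document; each statement's English description precedes it below -/
import Mathlib

section
/- For every natural number n, the integral over [-1,1] of ((P_{2n}(x) - P_{2n}(0))/x)^2 dx equals 2[1 - 2^{-4n} (binom(2n,n))^2], where P_k denotes the k-th Legendre polynomial. -/
open MeasureTheory Real

/-- The Legendre polynomials, defined by the three-term recurrence
`(n+1) P_{n+1}(x) = (2n+1) x P_n(x) - n P_{n-1}(x)` with `P_0 = 1`, `P_1 = x`. -/
noncomputable def legendreP : ℕ → ℝ → ℝ
  | 0, _ => 1
  | 1, x => x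
  | n + 2, x =>
      ((2 * (n : ℝ) + 3) * x * legendreP (n + 1) x - ((n : ℝ) + 1) * legendreP n x) / ((n : ℝ) + 2)

lemma legP_rec (n : ℕ) (x : ℝ) :
    legendreP (n + 2) x =
      ((2 * (n : ℝ) + 3) * x * legendreP (n + 1) x - ((n : ℝ) + 1) * legendreP n x) / ((n : ℝ) + 2) := by
  rfl

lemma contP : ∀ n, Continuous (legendreP n) := by
  intro n
  induction n using Nat.strong_induction_on with
  | _ n ih =>
    match n with
    | 0 => exact continuous_const
    | 1 => exact continuous_id
    | (m+2) =>
      have h1 := ih (m+1) (by omega)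
      have h0 := ih m (by omega)
      have e : legendreP (m+2) = fun x =>
          ((2 * (m : ℝ) + 3) * x * legendreP (m + 1) x - ((m : ℝ) + 1) * legendreP m x) / ((m : ℝ) + 2) := rfl
      rw [e]; fun_prop

noncomputable def legD : ℕ → ℝ → ℝ
  | 0, _ => 0
  | 1, _ => 1
  | n + 2, x =>
      ((2 * (n : ℝ) + 3) * (legendreP (n + 1) x + x * legD (n + 1) x) - ((n : ℝ) + 1) * legD n x) / ((n : ℝ) + 2)

lemma legD_rec (n : ℕ) (x : ℝ) :
    legD (n + 2) x =
      ((2 * (n : ℝ) + 3) * (legendreP (n + 1) x + x * legD (n + 1) x) - ((n : ℝ) + 1) * legD n x) / ((n : ℝ) + 2) := rfl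

lemma contD : ∀ n, Continuous (legD n) := by
  intro n
  induction n using Nat.strong_induction_on with
  | _ n ih =>
    match n with
    | 0 => exact continuous_const
    | 1 => exact continuous_const
    | (m+2) =>
      have h1 := ih (m+1) (by omega)
      have h0 := ih m (by omega)
      have hp := contP (m+1)
      have e : legD (m+2) = fun x =>
          ((2 * (m : ℝ) + 3) * (legendreP (m + 1) x + x * legD (m + 1) x) - ((m : ℝ) + 1) * legD m x) / ((m : ℝ) + 2) := rfl
      rw [e]; fun_prop

lemma hasDerivP : ∀ n x, HasDerivAt (legendreP n) (legD n x) x := by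
  intro n
  induction n using Nat.strong_induction_on with
  | _ n ih =>
    match n with
    | 0 =>
      intro x
      simpa [legendreP, legD] using (hasDerivAt_const x (1:ℝ))
    | 1 =>
      intro x
      simpa [legendreP, legD] using (hasDerivAt_id' x)
    | (m+2) =>
      intro x
      have h1 := ih (m+1) (by omega) x
      have h0 := ih m (by omega) x
      have hx : HasDerivAt (fun y : ℝ => y) 1 x := hasDerivAt_id x
      have hmul : HasDerivAt (fun y => (2 * (m : ℝ) + 3) * y * legendreP (m+1) y)
          ((2 * (m : ℝ) + 3) * (legendreP (m+1) x + x * legD (m+1) x)) x := by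
        have := (hx.mul h1).const_mul (2 * (m : ℝ) + 3)
        convert this using 1
        · rfl
        · rfl
        · ext y; simp only [Pi.mul_apply]; ring
        · ring
      have := ((hmul.sub (h0.const_mul ((m : ℝ) + 1))).div_const ((m : ℝ) + 2))
      rw [legD_rec]; convert this using 1
      · rfl
      · rfl
      · funext y; rw [legP_rec]; rfl
lemma AB : ∀ n : ℕ, (∀ x, legD (n+1) x = x * legD n x + ((n:ℝ)+1) * legendreP n x) ∧
    (∀ x, x * legD (n+1) x = legD n x + ((n:ℝ)+1) * legendreP (n+1) x) := by
  intro n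
  induction n with
  | zero =>
    constructor <;> intro x <;> simp [legendreP, legD]
  | succ n ih =>
    obtain ⟨hB, hA⟩ := ih
    have h2 : ((n:ℝ)+2) ≠ 0 := by positivity
    have hBnew : ∀ x, legD (n+2) x = x * legD (n+1) x + ((n:ℝ)+2) * legendreP (n+1) x := by
      intro x
      have hD : ((n:ℝ)+2) * legD (n+2) x
          = (2*(n:ℝ)+3) * (legendreP (n+1) x + x * legD (n+1) x) - ((n:ℝ)+1) * legD n x := by
        rw [legD_rec]; field_simp
      have hA1 := hA x
      have goalM : ((n:ℝ)+2) * legD (n+2) x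
          = ((n:ℝ)+2) * (x * legD (n+1) x + ((n:ℝ)+2) * legendreP (n+1) x) := by
        linear_combination hD + ((n:ℝ)+1) * hA1
      exact mul_left_cancel₀ h2 goalM
    constructor
    · intro x
      push_cast
      linear_combination hBnew x
    · intro x
      have hrec : ((n:ℝ)+2) * legendreP (n+2) x
          = (2*(n:ℝ)+3) * x * legendreP (n+1) x - ((n:ℝ)+1) * legendreP n x := by
        rw [legP_rec]; field_simp
      have hB1 := hBnew x
      have hA1 := hA x
      have hB0 := hB x
      push_cast
      linear_combination x * hB1 + x * hA1 - hB0 - hrec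

lemma derivDiff (n : ℕ) (x : ℝ) :
    legD (n+2) x - legD n x = (2*(n:ℝ)+3) * legendreP (n+1) x := by
  have hB := (AB (n+1)).1 x
  have hA := (AB n).2 x
  push_cast at hB
  linear_combination hB + hA
lemma evalOne : ∀ n, legendreP n 1 = 1 := by
  intro n
  induction n using Nat.strong_induction_on with
  | _ n ih =>
    match n with
    | 0 => rfl
    | 1 => rfl
    | (m+2) =>
      have h1 := ih (m+1) (by omega)
      have h0 := ih m (by omega)
      rw [legP_rec, h1, h0]
      have h2 : ((m:ℝ)+2) ≠ 0 := by positivity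
      field_simp
      ring

lemma evalNegOne : ∀ n, legendreP n (-1) = (-1)^n := by
  intro n
  induction n using Nat.strong_induction_on with
  | _ n ih =>
    match n with
    | 0 => simp [legendreP]
    | 1 => simp [legendreP]
    | (m+2) =>
      have h1 := ih (m+1) (by omega)
      have h0 := ih m (by omega)
      rw [legP_rec, h1, h0]
      have h2 : ((m:ℝ)+2) ≠ 0 := by positivity
      field_simp
      ring

lemma evalZeroOdd : ∀ n, legendreP (2*n+1) 0 = 0 := by
  intro n
  induction n with
  | zero => rfl
  | succ n ih =>
    have e : 2*(n+1)+1 = (2*n+1) + 2 := by omega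
    rw [e, legP_rec]
    rw [ih]
    simp

lemma intP (n : ℕ) : (∫ x in (-1:ℝ)..1, legendreP (n+1) x) = 0 := by
  have h23 : (2*(n:ℝ)+3) ≠ 0 := by positivity
  have hd : ∀ x ∈ Set.uIcc (-1:ℝ) 1,
      HasDerivAt (fun y => legendreP (n+2) y - legendreP n y) ((2*(n:ℝ)+3) * legendreP (n+1) x) x := by
    intro x _
    have h := (hasDerivP (n+2) x).sub (hasDerivP n x)
    have e := derivDiff n x
    rw [e] at h
    exact h
  have hcont : IntervalIntegrable (fun x => (2*(n:ℝ)+3) * legendreP (n+1) x) volume (-1) 1 :=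
    (continuous_const.mul (contP (n+1))).intervalIntegrable _ _
  have hint := intervalIntegral.integral_eq_sub_of_hasDerivAt hd hcont
  rw [intervalIntegral.integral_const_mul] at hint
  have hval : (legendreP (n+2) 1 - legendreP n 1) - (legendreP (n+2) (-1) - legendreP n (-1)) = 0 := by
    rw [evalOne, evalOne, evalNegOne, evalNegOne]
    rw [pow_add]
    ring
  rw [hval] at hint
  exact (mul_eq_zero.mp hint).resolve_left h23
lemma prodInt (a b : ℕ) : IntervalIntegrable (fun x => legendreP a x * legendreP b x) volume (-1) 1 :=
  ((contP a).mul (contP b)).intervalIntegrable _ _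

lemma intP' : ∀ m : ℕ, (∫ x in (-1:ℝ)..1, legendreP m x) = if m = 0 then 2 else 0 := by
  intro m
  match m with
  | 0 => simp [legendreP]; norm_num
  | (m+1) => simp [intP m]

lemma ortho : ∀ i j : ℕ, (∫ x in (-1:ℝ)..1, legendreP i x * legendreP j x)
    = if i = j then 2/(2*(i:ℝ)+1) else 0 := by
  intro i
  induction i using Nat.strong_induction_on with
  | _ i ih =>
    match i with
    | 0 =>
      intro j
      have e : (fun x => legendreP 0 x * legendreP j x) = fun x => legendreP j x := by
        funext x; simp [legendreP]
      rw [show (∫ x in (-1:ℝ)..1, legendreP 0 x * legendreP j x) = ∫ x in (-1:ℝ)..1, legendreP j x from by rw [e]]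
      rw [intP']
      rcases j with _ | m
      · norm_num
      · simp
    | 1 =>
      intro j
      rcases j with _ | m
      · have e : (fun x => legendreP 1 x * legendreP 0 x) = fun x => x := by
          funext x; simp [legendreP]
        rw [show (∫ x in (-1:ℝ)..1, legendreP 1 x * legendreP 0 x) = ∫ x in (-1:ℝ)..1, x from by rw [e]]
        simp
      · -- ∫ x * P_{m+1}
        have hm : (2*(m:ℝ)+3) ≠ 0 := by positivity
        have hpt : ∀ x, legendreP 1 x * legendreP (m+1) x
            = (((m:ℝ)+2)/(2*(m:ℝ)+3)) * legendreP (m+2) x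
              + (((m:ℝ)+1)/(2*(m:ℝ)+3)) * legendreP m x := by
          intro x
          have h2 : ((m:ℝ)+2) * legendreP (m+2) x
              = (2*(m:ℝ)+3)*x*legendreP (m+1) x - ((m:ℝ)+1)*legendreP m x := by
            rw [legP_rec]; field_simp
          have hx : legendreP 1 x = x := rfl
          rw [hx]
          field_simp
          linear_combination -h2
        rw [intervalIntegral.integral_congr (g := fun x =>
            (((m:ℝ)+2)/(2*(m:ℝ)+3)) * legendreP (m+2) x + (((m:ℝ)+1)/(2*(m:ℝ)+3)) * legendreP m x)
          (fun x _ => hpt x)]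
        rw [intervalIntegral.integral_add
            (((contP (m+2)).intervalIntegrable _ _).const_mul _)
            (((contP m).intervalIntegrable _ _).const_mul _)]
        rw [intervalIntegral.integral_const_mul, intervalIntegral.integral_const_mul]
        rw [intP (m+1), intP']
        rcases m with _ | m'
        · norm_num
        · simp
    | (i+2) =>
      intro j
      rcases j with _ | m
      · have e : (fun x => legendreP (i+2) x * legendreP 0 x) = fun x => legendreP (i+2) x := by
          funext x; simp [legendreP]
        rw [show (∫ x in (-1:ℝ)..1, legendreP (i+2) x * legendreP 0 x)
            = ∫ x in (-1:ℝ)..1, legendreP (i+2) x from by rw [e]]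
        rw [intP (i+1)]
        simp
      · have hi : ((i:ℝ)+2) ≠ 0 := by positivity
        have hm : (2*(m:ℝ)+3) ≠ 0 := by positivity
        set c1 : ℝ := (2*(i:ℝ)+3)*((m:ℝ)+2)/(((i:ℝ)+2)*(2*(m:ℝ)+3)) with hc1
        set c2 : ℝ := (2*(i:ℝ)+3)*((m:ℝ)+1)/(((i:ℝ)+2)*(2*(m:ℝ)+3)) with hc2
        set c3 : ℝ := ((i:ℝ)+1)/((i:ℝ)+2) with hc3
        have hpt : ∀ x, legendreP (i+2) x * legendreP (m+1) x
            = c1 * (legendreP (i+1) x * legendreP (m+2) x)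
              + c2 * (legendreP (i+1) x * legendreP m x)
              - c3 * (legendreP i x * legendreP (m+1) x) := by
          intro x
          have h1 : ((i:ℝ)+2) * legendreP (i+2) x
              = (2*(i:ℝ)+3)*x*legendreP (i+1) x - ((i:ℝ)+1)*legendreP i x := by
            rw [legP_rec]; field_simp
          have h2 : ((m:ℝ)+2) * legendreP (m+2) x
              = (2*(m:ℝ)+3)*x*legendreP (m+1) x - ((m:ℝ)+1)*legendreP m x := by
            rw [hc1, hc2, hc3] at *
            rw [legP_rec]; field_simp
          rw [hc1, hc2, hc3]
          field_simp
          linear_combination ((2*(m:ℝ)+3) * legendreP (m+1) x * h1 - (2*(i:ℝ)+3) * legendreP (i+1) x * h2)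
        rw [intervalIntegral.integral_congr (g := fun x =>
            c1 * (legendreP (i+1) x * legendreP (m+2) x)
              + c2 * (legendreP (i+1) x * legendreP m x)
              - c3 * (legendreP i x * legendreP (m+1) x)) (fun x _ => hpt x)]
        rw [intervalIntegral.integral_sub
            (((prodInt (i+1) (m+2)).const_mul _).add ((prodInt (i+1) m).const_mul _))
            ((prodInt i (m+1)).const_mul _)]
        rw [intervalIntegral.integral_add
            ((prodInt (i+1) (m+2)).const_mul _) ((prodInt (i+1) m).const_mul _)]
        rw [intervalIntegral.integral_const_mul, intervalIntegral.integral_const_mul,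
          intervalIntegral.integral_const_mul]
        rw [ih (i+1) (by omega) (m+2), ih (i+1) (by omega) m, ih i (by omega) (m+1)]
        by_cases hA : i = m+1
        · subst hA
          rw [if_pos (by omega), if_neg (by omega), if_pos rfl, if_neg (by omega)]
          rw [hc1, hc2, hc3]
          push_cast
          field_simp
          ring
        · by_cases hB : m = i+1
          · subst hB
            rw [if_neg (by omega), if_pos rfl, if_neg (by omega), if_pos (by omega)]
            rw [hc1, hc2, hc3]
            push_cast
            have h5 : (2*(i:ℝ)+5) ≠ 0 := by positivity
            field_simp
            ring
          · rw [if_neg (by omega), if_neg (by omega), if_neg (by omega), if_neg (by omega)]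
            ring
noncomputable def q : ℕ → ℝ → ℝ
  | 0, _ => 0
  | n+1, x => -(2*(n:ℝ)+1)/(2*(n:ℝ)+2) * q n x + (4*(n:ℝ)+3)/(2*(n:ℝ)+2) * legendreP (2*n+1) x

lemma contQ : ∀ n, Continuous (q n) := by
  intro n
  induction n with
  | zero => exact continuous_const
  | succ n ih =>
    have e : q (n+1) = fun x => -(2*(n:ℝ)+1)/(2*(n:ℝ)+2) * q n x
        + (4*(n:ℝ)+3)/(2*(n:ℝ)+2) * legendreP (2*n+1) x := rfl
    rw [e]
    have := contP (2*n+1)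
    fun_prop

lemma qInt (n : ℕ) : IntervalIntegrable (q n) volume (-1) 1 := (contQ n).intervalIntegrable _ _

lemma aRec (n : ℕ) : legendreP (2*(n+1)) 0 = -(2*(n:ℝ)+1)/(2*(n:ℝ)+2) * legendreP (2*n) 0 := by
  have e : 2*(n+1) = 2*n + 2 := by omega
  rw [e, legP_rec]
  push_cast
  field_simp
  ring

lemma xq (n : ℕ) (x : ℝ) : x * q n x = legendreP (2*n) x - legendreP (2*n) 0 := by
  induction n with
  | zero => simp [q, legendreP]
  | succ n ih =>
    have hq : q (n+1) x = -(2*(n:ℝ)+1)/(2*(n:ℝ)+2) * q n x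
        + (4*(n:ℝ)+3)/(2*(n:ℝ)+2) * legendreP (2*n+1) x := rfl
    have hrec : ((2*n:ℕ):ℝ) + 2 ≠ 0 := by positivity
    have hP : legendreP (2*n+2) x = ((2 * ((2*n:ℕ):ℝ) + 3) * x * legendreP (2*n+1) x
        - (((2*n:ℕ):ℝ) + 1) * legendreP (2*n) x) / (((2*n:ℕ):ℝ) + 2) := legP_rec (2*n) x
    have ha := aRec n
    have e : 2*(n+1) = 2*n + 2 := by omega
    rw [e] at ha ⊢
    rw [hq, ha, hP]
    push_cast at *
    have h2 : (2*(n:ℝ)+2) ≠ 0 := by positivity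
    field_simp
    linear_combination -(2*(n:ℝ)+1) * ih

lemma qortho : ∀ n j : ℕ, 2*n ≤ j → (∫ x in (-1:ℝ)..1, q n x * legendreP j x) = 0 := by
  intro n
  induction n with
  | zero => intro j _; simp [q]
  | succ n ih =>
    intro j hj
    have hpt : ∀ x, q (n+1) x * legendreP j x
        = (-(2*(n:ℝ)+1)/(2*(n:ℝ)+2)) * (q n x * legendreP j x)
          + ((4*(n:ℝ)+3)/(2*(n:ℝ)+2)) * (legendreP (2*n+1) x * legendreP j x) := by
      intro x
      have hq : q (n+1) x = -(2*(n:ℝ)+1)/(2*(n:ℝ)+2) * q n x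
          + (4*(n:ℝ)+3)/(2*(n:ℝ)+2) * legendreP (2*n+1) x := rfl
      rw [hq]; ring
    rw [intervalIntegral.integral_congr (g := fun x =>
        (-(2*(n:ℝ)+1)/(2*(n:ℝ)+2)) * (q n x * legendreP j x)
          + ((4*(n:ℝ)+3)/(2*(n:ℝ)+2)) * (legendreP (2*n+1) x * legendreP j x)) (fun x _ => hpt x)]
    rw [intervalIntegral.integral_add
        ((Continuous.intervalIntegrable (u := fun x => q n x * legendreP j x) ((contQ n).mul (contP j)) _ _).const_mul _)
        ((prodInt (2*n+1) j).const_mul _)]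
    rw [intervalIntegral.integral_const_mul, intervalIntegral.integral_const_mul]
    rw [ih j (by omega), ortho (2*n+1) j, if_neg (by omega)]
    ring

lemma qsq : ∀ n : ℕ, (∫ x in (-1:ℝ)..1, (q n x)^2) = 2*(1 - (legendreP (2*n) 0)^2) := by
  intro n
  induction n with
  | zero => simp [q, legendreP]
  | succ n ih =>
    set r : ℝ := -(2*(n:ℝ)+1)/(2*(n:ℝ)+2) with hr
    set c : ℝ := (4*(n:ℝ)+3)/(2*(n:ℝ)+2) with hc
    have hpt : ∀ x, (q (n+1) x)^2
        = (r^2) * (q n x)^2 + (2*r*c) * (q n x * legendreP (2*n+1) x)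
          + (c^2) * (legendreP (2*n+1) x * legendreP (2*n+1) x) := by
      intro x
      have hq : q (n+1) x = r * q n x + c * legendreP (2*n+1) x := rfl
      rw [hq]; ring
    rw [intervalIntegral.integral_congr (g := fun x =>
        (r^2) * (q n x)^2 + (2*r*c) * (q n x * legendreP (2*n+1) x)
          + (c^2) * (legendreP (2*n+1) x * legendreP (2*n+1) x)) (fun x _ => hpt x)]
    have i1 : IntervalIntegrable (fun x => (q n x)^2) volume (-1) 1 :=
      (((contQ n).pow 2)).intervalIntegrable _ _
    have i2 : IntervalIntegrable (fun x => q n x * legendreP (2*n+1) x) volume (-1) 1 :=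
      (((contQ n).mul (contP (2*n+1)))).intervalIntegrable _ _
    rw [intervalIntegral.integral_add ((i1.const_mul _).add (i2.const_mul _))
        ((prodInt (2*n+1) (2*n+1)).const_mul _)]
    rw [intervalIntegral.integral_add (i1.const_mul _) (i2.const_mul _)]
    rw [intervalIntegral.integral_const_mul, intervalIntegral.integral_const_mul,
      intervalIntegral.integral_const_mul]
    rw [ih, qortho n (2*n+1) (by omega), ortho (2*n+1) (2*n+1), if_pos rfl]
    rw [aRec n, ← hr]
    push_cast
    have h2 : (2*(n:ℝ)+2) ≠ 0 := by positivity
    have h3 : (4*(n:ℝ)+3) ≠ 0 := by positivity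
    rw [hr, hc]
    field_simp
    ring
lemma asq : ∀ n : ℕ, (legendreP (2*n) 0)^2 = ((2*n).choose n : ℝ)^2 / 2^(4*n) := by
  intro n
  induction n with
  | zero => simp [legendreP]
  | succ n ih =>
    have hc := Nat.succ_mul_centralBinom_succ n
    rw [Nat.centralBinom, Nat.centralBinom] at hc
    have hcR : ((n:ℝ)+1) * ((2*(n+1)).choose (n+1) : ℝ) = 2*(2*(n:ℝ)+1) * ((2*n).choose n : ℝ) := by
      exact_mod_cast congrArg (fun k : ℕ => (k : ℝ)) hc
    have h1 : ((n:ℝ)+1) ≠ 0 := by positivity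
    have h2 : (2:ℝ)^(4*n) ≠ 0 := by positivity
    have e4 : 4*(n+1) = 4*n + 4 := by omega
    rw [aRec n, e4, pow_add]
    have hC : ((2*(n+1)).choose (n+1) : ℝ) = 2*(2*(n:ℝ)+1) * ((2*n).choose n : ℝ) / ((n:ℝ)+1) := by
      field_simp at hcR ⊢
      linarith [hcR]
    rw [hC, mul_pow, ih]
    field_simp

theorem legendre_even_filter_integral (n : ℕ) :
    ∫ x in (-1 : ℝ)..1, ((legendreP (2 * n) x - legendreP (2 * n) 0) / x) ^ 2
      = 2 * (1 - ((2 * n).choose n : ℝ) ^ 2 / 2 ^ (4 * n)) := by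

  have h0 : ∀ᵐ (x:ℝ) ∂volume, x ∈ Set.uIoc (-1:ℝ) 1 →
      ((legendreP (2*n) x - legendreP (2*n) 0)/x)^2 = (q n x)^2 := by
    filter_upwards [compl_mem_ae_iff.mpr (measure_singleton (0:ℝ))] with x hx _
    have hx0 : x ≠ 0 := by simpa using hx
    rw [← xq n x, mul_comm, mul_div_assoc, div_self hx0, mul_one]
  rw [intervalIntegral.integral_congr_ae h0, qsq n, asq n]
end

section
/- For every natural number n ≥ 1, ∑_{k=2}^{n} ((-1)^k/(k-1)) · binom(n,k) = n·(H_n - 1), where H_n is the n-th harmonic number. -/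
open Finset

/-- The harmonic number `H_n = 1 + 1/2 + ⋯ + 1/n`. -/
noncomputable def harmonicNum (n : ℕ) : ℝ := ∑ j ∈ Finset.Icc 1 n, (1 : ℝ) / j

lemma harmonicNum_succ (n : ℕ) :
    harmonicNum (n + 1) = harmonicNum n + 1 / (n + 1 : ℝ) := by
  unfold harmonicNum
  rw [Finset.sum_Icc_succ_top (by omega)]
  push_cast
  ring

lemma lemA (n : ℕ) :
    ∑ j ∈ range (n + 1), (-1 : ℝ) ^ j / (j + 1) * (n.choose j : ℝ)
      = 1 / (n + 1 : ℝ) := by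
  have key : ∀ j ∈ range (n + 1),
      (-1 : ℝ) ^ j / (j + 1) * (n.choose j : ℝ)
        = 1 / (n + 1 : ℝ) * ((-1 : ℝ) ^ j * ((n + 1).choose (j + 1) : ℝ)) := by
    intro j _
    have h := Nat.add_one_mul_choose_eq n j
    have h' : ((n : ℝ) + 1) * (n.choose j : ℝ)
        = ((n + 1).choose (j + 1) : ℝ) * ((j : ℝ) + 1) := by
      exact_mod_cast congrArg (Nat.cast : ℕ → ℝ) h
    have hj : ((j : ℝ) + 1) ≠ 0 := by positivity
    have hn : ((n : ℝ) + 1) ≠ 0 := by positivity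
    field_simp
    linear_combination h'
  rw [Finset.sum_congr rfl key, ← Finset.mul_sum]
  have halt : ∑ m ∈ range (n + 2), ((-1 : ℤ)) ^ m * ((n + 1).choose m : ℤ) = 0 :=
    Int.alternating_sum_range_choose_of_ne (by omega)
  have haltR : ∑ m ∈ range (n + 2), ((-1 : ℝ)) ^ m * ((n + 1).choose m : ℝ) = 0 := by
    exact_mod_cast congrArg (Int.cast : ℤ → ℝ) halt
  rw [Finset.sum_range_succ'] at haltR
  simp only [pow_succ, pow_zero, one_mul, Nat.choose_zero_right, Nat.cast_one] at haltR
  have : ∑ j ∈ range (n + 1), (-1 : ℝ) ^ j * ((n + 1).choose (j + 1) : ℝ) = 1 := by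
    have := haltR
    have e : ∑ i ∈ range (n + 1), (-1 : ℝ) ^ i * -1 * ((n + 1).choose (i + 1) : ℝ)
        = -∑ j ∈ range (n + 1), (-1 : ℝ) ^ j * ((n + 1).choose (j + 1) : ℝ) := by
      rw [← Finset.sum_neg_distrib]
      exact Finset.sum_congr rfl (fun i _ => by ring)
    rw [e] at this
    linarith
  rw [this, mul_one]

lemma lemB (n : ℕ) :
    ∑ j ∈ range n, (-1 : ℝ) ^ j / (j + 1) * (n.choose (j + 1) : ℝ)
      = harmonicNum n := by
  induction n with
  | zero => simp [harmonicNum]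
  | succ n ih =>
    have pascal : ∀ j ∈ range (n + 1),
        (-1 : ℝ) ^ j / (j + 1) * ((n + 1).choose (j + 1) : ℝ)
          = (-1 : ℝ) ^ j / (j + 1) * (n.choose (j + 1) : ℝ)
            + (-1 : ℝ) ^ j / (j + 1) * (n.choose j : ℝ) := by
      intro j _
      rw [Nat.choose_succ_succ]
      push_cast
      ring
    rw [Finset.sum_congr rfl pascal, Finset.sum_add_distrib, lemA, harmonicNum_succ, ← ih]
    rw [Finset.sum_range_succ]
    simp [Nat.choose_succ_self]

lemma lemM (n : ℕ) :
    ∑ i ∈ range n, (-1 : ℝ) ^ i / (i + 1) * ((n + 1).choose (i + 2) : ℝ)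
      = (n + 1 : ℝ) * (harmonicNum (n + 1) - 1) := by
  induction n with
  | zero => simp [harmonicNum]
  | succ n ih =>
    have pascal : ∀ i ∈ range (n + 1),
        (-1 : ℝ) ^ i / (i + 1) * ((n + 2).choose (i + 2) : ℝ)
          = (-1 : ℝ) ^ i / (i + 1) * ((n + 1).choose (i + 2) : ℝ)
            + (-1 : ℝ) ^ i / (i + 1) * ((n + 1).choose (i + 1) : ℝ) := by
      intro i _
      rw [show n + 2 = (n + 1) + 1 from rfl, Nat.choose_succ_succ (n + 1) (i + 1)]
      push_cast
      ring
    rw [Finset.sum_congr rfl pascal, Finset.sum_add_distrib, lemB (n + 1)]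
    have first : ∑ i ∈ range (n + 1), (-1 : ℝ) ^ i / (i + 1) * ((n + 1).choose (i + 2) : ℝ)
        = (n + 1 : ℝ) * (harmonicNum (n + 1) - 1) := by
      rw [Finset.sum_range_succ]
      have : (n + 1).choose (n + 2) = 0 := Nat.choose_eq_zero_of_lt (by omega)
      rw [this, ← ih]
      simp
    rw [first, harmonicNum_succ (n + 1)]
    push_cast
    have hn : ((n : ℝ) + 2) ≠ 0 := by positivity
    field_simp
    ring

theorem alternating_binomial_sum_km1 (n : ℕ) (hn : 1 ≤ n) :
    ∑ k ∈ Finset.Icc 2 n, (-1 : ℝ) ^ k / ((k : ℝ) - 1) * (n.choose k : ℝ)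
      = n * (harmonicNum n - 1) := by
  obtain ⟨m, rfl⟩ : ∃ m, n = m + 1 := ⟨n - 1, by omega⟩
  have : Finset.Icc 2 (m + 1) = Finset.Ico 2 (m + 2) := by
    exact (Finset.Ico_add_one_right_eq_Icc 2 (m + 1)).symm
  rw [this, Finset.sum_Ico_eq_sum_range]
  have : m + 2 - 2 = m := by omega
  rw [this]
  have congr1 : ∀ i ∈ range m,
      (-1 : ℝ) ^ (2 + i) / (((2 + i : ℕ) : ℝ) - 1) * ((m + 1).choose (2 + i) : ℝ)
        = (-1 : ℝ) ^ i / (i + 1) * ((m + 1).choose (i + 2) : ℝ) := by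
    intro i _
    rw [show 2 + i = i + 2 from by omega]
    push_cast
    rw [pow_add]
    ring_nf
  rw [Finset.sum_congr rfl congr1, lemM m]
  push_cast
  ring
end
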